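/- With R = K⟦f₁,…,f_s⟧ as in the context, suppose {f₁,…,f_s} is a basis of R. Then for every f ∈ K⟦x⟧ the decomposition of f is unique in the following sense: if f = g₁ + r₁ = g₂ + r₂ with g₁, g₂ ∈ R and supp(r₁), supp(r₂) ⊆ ℕ∖⟨o(f₁),…,o(f_s)⟩, then r₁ = r₂ and g₁ = g₂. -/

import Mathlib

set_option synthInstance.maxHeartbeats 1000000
set_option maxHeartbeats 1000000

open PowerSeries

/-- The order of a formal power series: the least `i` such that the coefficient of `x^i`
is nonzero (junk value `0` for the zero series). -/
noncomputable def ord (K : Type*) [Field K] (f : PowerSeries K) : ℕ :=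
  sInf {i | coeff i f ≠ 0}

/-- The set of orders of nonzero elements of a subalgebra `R ⊆ K⟦x⟧`. -/
def oSet (K : Type*) [Field K] (R : Subalgebra K (PowerSeries K)) : Set ℕ :=
  {n | ∃ f ∈ R, f ≠ 0 ∧ ord K f = n}

/-- The quotient `K⟦x⟧/R` has finite length as an `R`-module. -/
def FiniteLengthQuot (K : Type*) [Field K] (R : Subalgebra K (PowerSeries K)) : Prop :=
  IsFiniteLength R (PowerSeries K ⧸ LinearMap.range (Algebra.linearMap R (PowerSeries K)))

/-- The closure of a subalgebra of `K⟦x⟧` in the `x`-adic topology: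
`f` belongs to the closure of `S` iff for every `n` there is an element of `S`
agreeing with `f` on all coefficients up to `n`. -/
def adicClosure {K : Type*} [Field K] (S : Subalgebra K (PowerSeries K)) :
    Subalgebra K (PowerSeries K) where
  carrier := {f | ∀ n : ℕ, ∃ p ∈ S, ∀ i ≤ n, coeff i f = coeff i p}
  add_mem' := by
    intro f g hf hg n
    obtain ⟨p, hpS, hp⟩ := hf n
    obtain ⟨q, hqS, hq⟩ := hg n
    exact ⟨p + q, S.add_mem hpS hqS, fun i hi => by
      simp [map_add, hp i hi, hq i hi]⟩
  mul_mem' := by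
    intro f g hf hg n
    obtain ⟨p, hpS, hp⟩ := hf n
    obtain ⟨q, hqS, hq⟩ := hg n
    refine ⟨p * q, S.mul_mem hpS hqS, fun i hi => ?_⟩
    rw [coeff_mul, coeff_mul]
    refine Finset.sum_congr rfl fun ab hab => ?_
    have h : ab.1 + ab.2 = i := by simpa using hab
    rw [hp ab.1 (by omega), hq ab.2 (by omega)]
  algebraMap_mem' := fun r => fun n => ⟨algebraMap K _ r, S.algebraMap_mem r, fun i _ => rfl⟩

/-- `K⟦f₁,…,f_s⟧`, the subalgebra of `K⟦x⟧` consisting of all power series of the form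
`P(f₁,…,f_s)` with `P ∈ K⟦X₁,…,X_s⟧` (for `fᵢ` of positive order), realized as the
`x`-adic closure of the subalgebra generated by `f₁, …, f_s`; this closure coincides with
the image of the substitution homomorphism `K⟦X₁,…,X_s⟧ → K⟦x⟧`, `Xᵢ ↦ fᵢ`. -/
noncomputable def seriesAlgebra {K : Type*} [Field K] {s : ℕ} (f : Fin s → PowerSeries K) :
    Subalgebra K (PowerSeries K) :=
  adicClosure (Algebra.adjoin K (Set.range f))

/-- If `{f₁,…,f_s}` is a basis of `R = K⟦f₁,…,f_s⟧`, then the decomposition `f = g + r`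
with `g ∈ R` and `supp(r) ⊆ ℕ ∖ ⟨o(f₁),…,o(f_s)⟩` is unique. -/
theorem stmt_6 (K : Type*) [Field K] {s : ℕ} (f : Fin s → PowerSeries K)
    (hf0 : ∀ i, f i ≠ 0) (hford : ∀ i, 0 < ord K (f i))
    (hlen : FiniteLengthQuot K (seriesAlgebra f))
    (hbasis : oSet K (seriesAlgebra f)
        = ↑(AddSubmonoid.closure (Set.range fun j => ord K (f j))))
    (F : PowerSeries K) (g₁ g₂ r₁ r₂ : PowerSeries K)
    (hg₁ : g₁ ∈ seriesAlgebra f) (hg₂ : g₂ ∈ seriesAlgebra f)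
    (hd₁ : F = g₁ + r₁) (hd₂ : F = g₂ + r₂)
    (hr₁ : ∀ i : ℕ, coeff i r₁ ≠ 0 →
      i ∉ AddSubmonoid.closure (Set.range fun j => ord K (f j)))
    (hr₂ : ∀ i : ℕ, coeff i r₂ ≠ 0 →
      i ∉ AddSubmonoid.closure (Set.range fun j => ord K (f j))) :
    r₁ = r₂ ∧ g₁ = g₂ := by
  have hmem : g₁ - g₂ ∈ seriesAlgebra f := Subalgebra.sub_mem _ hg₁ hg₂
  have heq : g₁ - g₂ = r₂ - r₁ := by
    have := hd₁.symm.trans hd₂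
    linear_combination this
  have hzero : g₁ - g₂ = 0 := by
    by_contra h0
    have hord : ord K (g₁ - g₂) ∈ oSet K (seriesAlgebra f) :=
      ⟨g₁ - g₂, hmem, h0, rfl⟩
    rw [hbasis] at hord
    have hne : {i | coeff i (g₁ - g₂) ≠ 0}.Nonempty := by
      by_contra h
      apply h0
      ext i
      simp only [Set.not_nonempty_iff_eq_empty, Set.eq_empty_iff_forall_notMem,
        Set.mem_setOf_eq, not_not] at h
      simpa using h i
    set n := ord K (g₁ - g₂) with hn
    have hcoeff : coeff n (g₁ - g₂) ≠ 0 := Nat.sInf_mem hne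
    rw [show g₁ - g₂ = r₂ - r₁ from heq, map_sub] at hcoeff
    rcases ne_or_eq (coeff n r₁) 0 with h1 | h1
    · exact hr₁ _ h1 hord
    · exact hr₂ _ (by intro h2; rw [h1, h2] at hcoeff; simp at hcoeff) hord
  refine ⟨(sub_eq_zero.mp (heq ▸ hzero)).symm, sub_eq_zero.mp hzero⟩
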